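/- Let χ₁, χ₂ be Dirichlet characters modulo N₁, N₂ with values in ℂ, let k ≥ 2 be an integer, and let K be the subfield of ℂ generated over ℚ by the set {σ_{χ₁,χ₂}^{k-1}(n) : n ≥ 1}. Then for every positive integer n, the value χ₁(n)·χ₂(n) of the product character lies in K. -/

import Mathlib

/-- The signed divisor sum `σ_{χ₁,χ₂}^{k-1}(n) = ∑_{d ∣ n} χ₁(n/d) χ₂(d) d^{k-1}`. -/
noncomputable def sigmaC {N₁ N₂ : ℕ} (χ₁ : DirichletCharacter ℂ N₁)
    (χ₂ : DirichletCharacter ℂ N₂) (k : ℕ) (n : ℕ) : ℂ :=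
  ∑ d ∈ n.divisors, χ₁ ((n / d : ℕ) : ZMod N₁) * χ₂ ((d : ℕ) : ZMod N₂) * (d : ℂ) ^ (k - 1)

/-- The field `K ⊆ ℂ` generated over `ℚ` by all Fourier coefficients
`σ_{χ₁,χ₂}^{k-1}(n)`, `n ≥ 1`, contains all values `χ₁(n)·χ₂(n)` of the product
character. -/
theorem stmt_14 (N₁ N₂ : ℕ) (χ₁ : DirichletCharacter ℂ N₁) (χ₂ : DirichletCharacter ℂ N₂)
    (k : ℕ) (hk : 2 ≤ k) :
    ∀ n : ℕ, 0 < n →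
      χ₁ (n : ZMod N₁) * χ₂ (n : ZMod N₂) ∈
        IntermediateField.adjoin ℚ {z : ℂ | ∃ m : ℕ, 0 < m ∧ z = sigmaC χ₁ χ₂ k m} := by
  set K := IntermediateField.adjoin ℚ {z : ℂ | ∃ m : ℕ, 0 < m ∧ z = sigmaC χ₁ χ₂ k m} with hK
  intro n
  induction n using Nat.recOnMul with
  | zero => intro h; omega
  | one => intro _; simpa using one_mem K
  | prime p hp =>
    intro _
    have hσ : ∀ m : ℕ, 0 < m → sigmaC χ₁ χ₂ k m ∈ K := fun m hm =>
      IntermediateField.subset_adjoin _ _ ⟨m, hm, rfl⟩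
    have hpc : (p : ℂ) ≠ 0 := Nat.cast_ne_zero.mpr hp.pos.ne'
    have hid : sigmaC χ₁ χ₂ k p ^ 2 - sigmaC χ₁ χ₂ k (p ^ 2)
        = χ₁ (p : ZMod N₁) * χ₂ (p : ZMod N₂) * (p : ℂ) ^ (k - 1) := by
      have h1 : sigmaC χ₁ χ₂ k p = sigmaC χ₁ χ₂ k (p ^ 1) := by norm_num
      rw [h1]
      unfold sigmaC
      rw [Nat.sum_divisors_prime_pow hp, Nat.sum_divisors_prime_pow hp]
      rw [Finset.sum_range_succ, Finset.sum_range_succ, Finset.sum_range_succ,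
        Finset.sum_range_succ, Finset.sum_range_succ]
      simp only [Finset.sum_range_zero, pow_zero, pow_one, Nat.div_one, Nat.div_self hp.pos]
      have e1 : p ^ 2 / p = p := by
        rw [pow_two, Nat.mul_div_cancel _ hp.pos]
      have e2 : p ^ 2 / p ^ 2 = 1 := Nat.div_self (by positivity)
      rw [e1, e2]
      push_cast
      rw [map_pow, map_pow, map_one, map_one]
      ring
    have h2 : χ₁ (p : ZMod N₁) * χ₂ (p : ZMod N₂)
        = (sigmaC χ₁ χ₂ k p ^ 2 - sigmaC χ₁ χ₂ k (p ^ 2)) * ((p : ℂ) ^ (k - 1))⁻¹ := by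
      rw [hid]; field_simp
    rw [h2]
    exact mul_mem (sub_mem (pow_mem (hσ p hp.pos) 2) (hσ (p ^ 2) (by positivity)))
      (inv_mem (pow_mem (IntermediateField.natCast_mem K p) _))
  | mul m n hm hn =>
    intro hmn
    have h0 : m ≠ 0 ∧ n ≠ 0 := Nat.mul_ne_zero_iff.mp hmn.ne'
    have hmem := mul_mem (hm (Nat.pos_of_ne_zero h0.1)) (hn (Nat.pos_of_ne_zero h0.2))
    convert hmem using 1
    push_cast
    rw [map_mul, map_mul]
    ring
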